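/- Let X be a non-negative random variable with distribution function F and Y an independent Beta(1, d−1) random variable. Then the Williamson d-transform of F equals the survival function of the product XY: W_d F(x) = P[XY > x] for all x > 0. -/

import Mathlib

open MeasureTheory ProbabilityTheory Filter Set

-- auxiliary: the real integral of the beta density over (c, 1)
lemma beta_tail_integral (d : ℕ) (hd : 2 ≤ d) (c : ℝ) (hc0 : 0 < c) (hc1 : c < 1) :
    ∫ y in Set.Ioo c 1, (d - 1 : ℝ) * (1 - y) ^ (d - 2) = (1 - c) ^ (d - 1) := by
  rw [← MeasureTheory.integral_Ioc_eq_integral_Ioo,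
    ← intervalIntegral.integral_of_le hc1.le]
  have h1 : ∀ y : ℝ, (d - 1 : ℝ) * (1 - y) ^ (d - 2) =
      (fun u : ℝ => (d - 1 : ℝ) * u ^ (d - 2)) (1 - y) := fun y => rfl
  calc ∫ y in c..1, (d - 1 : ℝ) * (1 - y) ^ (d - 2)
      = ∫ u in (1-1:ℝ)..(1-c), (d - 1 : ℝ) * u ^ (d - 2) := by
        rw [← intervalIntegral.integral_comp_sub_left (fun u : ℝ => (d - 1 : ℝ) * u ^ (d - 2)) 1]
    _ = (d - 1 : ℝ) * ∫ u in (0:ℝ)..(1-c), u ^ (d - 2) := by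
        rw [intervalIntegral.integral_const_mul]; norm_num
    _ = (d - 1 : ℝ) * ((1 - c) ^ (d - 2 + 1) / (((d - 2 : ℕ) : ℝ) + 1)) := by
        rw [integral_pow, zero_pow (by omega : d - 2 + 1 ≠ 0)]; ring_nf
    _ = (1 - c) ^ (d - 1) := by
        have h2 : d - 2 + 1 = d - 1 := by omega
        have h3 : ((d - 2 : ℕ) : ℝ) + 1 = (d : ℝ) - 1 := by
          have h5 : (2:ℕ) ≤ d := hd
          push_cast [Nat.cast_sub h5]; ring
        have h4 : (d:ℝ) - 1 ≠ 0 := by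
          have : (2:ℝ) ≤ (d:ℝ) := by exact_mod_cast hd
          linarith
        rw [h2, h3]
        field_simp

theorem williamson_transform_eq_survival_of_beta_mixture
    {Ω : Type*} [MeasureSpace Ω] [IsProbabilityMeasure (ℙ : Measure Ω)]
    (d : ℕ) (hd : 2 ≤ d)
    (X Y : Ω → ℝ) (hXm : Measurable X) (hYm : Measurable Y)
    (hX0 : ∀ᵐ ω ∂ℙ, 0 ≤ X ω)
    (hInd : IndepFun X Y ℙ)
    (hY : Measure.map Y ℙ = volume.withDensity (fun y =>
      ENNReal.ofReal (Set.indicator (Set.Ioo (0:ℝ) 1)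
        (fun y => (d - 1 : ℝ) * (1 - y) ^ (d - 2)) y))) :
    ∀ x > (0:ℝ),
      (∫ ω, (if x < X ω then (1 - x / X ω) ^ (d - 1) else 0) ∂ℙ) =
        (ℙ {ω | x < X ω * Y ω}).toReal := by
  intro x hx
  set g : ℝ → ℝ := fun y => (d - 1 : ℝ) * (1 - y) ^ (d - 2) with hg
  have hνprob : IsProbabilityMeasure (Measure.map Y ℙ) := Measure.isProbabilityMeasure_map hYm.aemeasurable
  have hμprob : IsProbabilityMeasure (Measure.map X ℙ) := Measure.isProbabilityMeasure_map hXm.aemeasurable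
  set f : ℝ → ℝ := fun a => if x < a then (1 - x / a) ^ (d - 1) else 0 with hf
  have hfm : Measurable f := by
    apply Measurable.ite (measurableSet_lt measurable_const measurable_id)
    · exact (measurable_const.sub (measurable_const.div measurable_id)).pow_const _
    · exact measurable_const
  have hf0 : ∀ a, 0 ≤ f a := by
    intro a
    simp only [hf]
    split_ifs with h
    · apply pow_nonneg
      have hxa : x / a ≤ 1 := by
        rw [div_le_one (lt_trans hx h)]; exact h.le
      linarith
    · exact le_rfl
  -- key computation: ν {y | x < a * y} = ofReal (f a)
  have key : ∀ a : ℝ, (Measure.map Y ℙ) {y | x < a * y} = ENNReal.ofReal (f a) := by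
    intro a
    have hSm : MeasurableSet {y : ℝ | x < a * y} := by
      have : {y : ℝ | x < a * y} = (fun y => a * y) ⁻¹' Set.Ioi x := rfl
      rw [this]
      exact (measurable_const_mul a) measurableSet_Ioi
    rw [hY, withDensity_apply _ hSm]
    by_cases hax : x < a
    · -- then a > 0 and {y | x < a*y} = Ioi (x/a)
      have ha : 0 < a := lt_trans hx hax
      have hSeq : {y : ℝ | x < a * y} = Set.Ioi (x / a) := by
        ext y
        simp only [Set.mem_setOf_eq, Set.mem_Ioi, div_lt_iff₀ ha, mul_comm]
      have hc0 : 0 < x / a := div_pos hx ha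
      have hc1 : x / a < 1 := (div_lt_one ha).mpr hax
      rw [hSeq]
      have hinter : Set.Ioo (0:ℝ) 1 ∩ Set.Ioi (x / a) = Set.Ioo (x / a) 1 := by
        ext y
        simp only [Set.mem_inter_iff, Set.mem_Ioo, Set.mem_Ioi]
        constructor
        · rintro ⟨⟨_, hy1⟩, hy2⟩; exact ⟨hy2, hy1⟩
        · rintro ⟨hy1, hy2⟩; exact ⟨⟨lt_trans hc0 hy1, hy2⟩, hy1⟩
      have step1 : ∫⁻ y in Set.Ioi (x / a),
          ENNReal.ofReal (Set.indicator (Set.Ioo (0:ℝ) 1) g y)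
          = ∫⁻ y in Set.Ioo (x / a) 1, ENNReal.ofReal (g y) := by
        have : (fun y => ENNReal.ofReal (Set.indicator (Set.Ioo (0:ℝ) 1) g y)) =
            Set.indicator (Set.Ioo (0:ℝ) 1) (fun y => ENNReal.ofReal (g y)) := by
          ext y
          by_cases hy : y ∈ Set.Ioo (0:ℝ) 1 <;>
            simp [Set.indicator_of_mem, Set.indicator_of_notMem, hy]
        rw [this, lintegral_indicator measurableSet_Ioo _,
          Measure.restrict_restrict measurableSet_Ioo, hinter]
      rw [step1]
      have hgc : Continuous g := by
        apply Continuous.mul continuous_const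
        exact (continuous_const.sub continuous_id).pow _
      have hgint : IntegrableOn g (Set.Ioo (x / a) 1) volume :=
        (hgc.continuousOn.integrableOn_Icc).mono_set Set.Ioo_subset_Icc_self
      have hgnn : 0 ≤ᵐ[volume.restrict (Set.Ioo (x / a) 1)] g := by
        refine ae_restrict_of_forall_mem measurableSet_Ioo ?_
        intro y hy
        have h1 : (0:ℝ) ≤ 1 - y := by linarith [hy.2]
        have h2 : (0:ℝ) ≤ (d:ℝ) - 1 := by
          have : (2:ℝ) ≤ d := by exact_mod_cast hd
          linarith
        exact mul_nonneg h2 (pow_nonneg h1 _)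
      rw [← ofReal_integral_eq_lintegral_ofReal hgint hgnn,
        beta_tail_integral d hd _ hc0 hc1, hf]
      simp [hax]
    · -- a ≤ x : the set is disjoint with (0,1) up to the density vanishing
      have hzero : ∀ y ∈ {y : ℝ | x < a * y},
          ENNReal.ofReal (Set.indicator (Set.Ioo (0:ℝ) 1) g y) = 0 := by
        intro y hy
        have hxy : x < a * y := hy
        have hnot : y ∉ Set.Ioo (0:ℝ) 1 := by
          intro hmem
          obtain ⟨hy0, hy1⟩ := hmem
          rcases le_or_gt a 0 with ha | ha
          · nlinarith
          · nlinarith [not_lt.mp hax]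
        rw [Set.indicator_of_notMem hnot, ENNReal.ofReal_zero]
      have : ∫⁻ y in {y : ℝ | x < a * y},
          ENNReal.ofReal (Set.indicator (Set.Ioo (0:ℝ) 1) g y) = 0 := by
        rw [setLIntegral_congr_fun hSm hzero]
        simp
      rw [this, hf]
      simp [hax]
  -- rewrite both sides
  have hsm : MeasurableSet {p : ℝ × ℝ | x < p.1 * p.2} :=
    measurableSet_lt measurable_const (measurable_fst.mul measurable_snd)
  have hmap : Measure.map (fun ω => (X ω, Y ω)) ℙ = (Measure.map X ℙ).prod (Measure.map Y ℙ) :=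
    (indepFun_iff_map_prod_eq_prod_map_map hXm.aemeasurable hYm.aemeasurable).mp hInd
  have hRHS : ℙ {ω | x < X ω * Y ω} = ∫⁻ a, ENNReal.ofReal (f a) ∂(Measure.map X ℙ) := by
    have h0 : {ω | x < X ω * Y ω} = (fun ω => (X ω, Y ω)) ⁻¹' {p : ℝ × ℝ | x < p.1 * p.2} :=
      rfl
    rw [h0, ← Measure.map_apply (hXm.prodMk hYm) hsm, hmap, Measure.prod_apply hsm]
    refine lintegral_congr fun a => ?_
    have : (Prod.mk a ⁻¹' {p : ℝ × ℝ | x < p.1 * p.2}) = {y | x < a * y} := rfl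
    rw [this, key a]
  have hLHS : (∫ ω, (if x < X ω then (1 - x / X ω) ^ (d - 1) else 0) ∂ℙ)
      = ∫ a, f a ∂(Measure.map X ℙ) := by
    rw [integral_map hXm.aemeasurable hfm.aestronglyMeasurable]
  rw [hLHS, hRHS, integral_eq_lintegral_of_nonneg_ae (ae_of_all _ hf0)
    hfm.aestronglyMeasurable]
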